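/- Let n ≥ 0, N = 2^n, and let G_N = P_π · (G_2^{⊗n}) over 𝔽₂ = ZMod 2 for a permutation matrix P_π. Then every linear code C ⊆ 𝔽₂^N of dimension K can be represented as a modified G_N-coset code: there exist a subset A of {1,…,N} with |A| = K and coefficients v_{j,i} ∈ 𝔽₂ (for j ∈ A, i ∉ A, j < i) such that C = { u · G_N : u ∈ 𝔽₂^N, and for every i ∉ A, u_i = Σ_{j ∈ A, j < i} v_{j,i} · u_j }. -/
import Mathlib


/-- Arıkan's polar transform kernel `G₂ = [[1,0],[1,1]]` over `𝔽₂`. -/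
def G2 : Matrix (Fin 2) (Fin 2) (ZMod 2) := !![1, 0; 1, 1]

/-- The `n`-fold Kronecker power `G₂^{⊗n}` over `𝔽₂`. -/
def kronPow : (n : ℕ) → Matrix (Fin (2 ^ n)) (Fin (2 ^ n)) (ZMod 2)
  | 0 => 1
  | n + 1 =>
    Matrix.reindex
      (finProdFinEquiv.trans (finCongr (by rw [pow_succ]; ring)))
      (finProdFinEquiv.trans (finCongr (by rw [pow_succ]; ring)))
      (Matrix.kroneckerMap (· * ·) G2 (kronPow n))

/-- The permutation matrix `P_π` over `𝔽₂`: `(P_π)_{i,j} = 1` iff `j = π i`. -/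
def permMatrix {N : ℕ} (π : Equiv.Perm (Fin N)) : Matrix (Fin N) (Fin N) (ZMod 2) :=
  Matrix.of fun i j => if j = π i then 1 else 0

/-- The set of vectors of `𝔽₂^N` satisfying 'dynamic frozen bit' constraints:
coordinates in `A` are free and each coordinate `i ∉ A` equals
`∑_{j ∈ A, j < i} v j i * u j`. -/
def dynFrozenSet {N : ℕ} (A : Finset (Fin N)) (v : Fin N → Fin N → ZMod 2) :
    Set (Fin N → ZMod 2) :=
  {u : Fin N → ZMod 2 | ∀ i ∉ A, u i = ∑ j ∈ A.filter (fun j => j < i), v j i * u j}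


open Matrix Finset in
lemma det_kronPow (n : ℕ) : (kronPow n).det = 1 := by
  induction n with
  | zero => simp [kronPow]
  | succ n ih =>
    rw [kronPow, Matrix.det_reindex_self, Matrix.det_kronecker]
    have hG2 : G2.det = 1 := by
      simp [G2, Matrix.det_fin_two_of]
    rw [hG2, ih]
    simp

lemma det_permMatrix {N : ℕ} (π : Equiv.Perm (Fin N)) : (permMatrix π).det = 1 := by
  have h : permMatrix π = Equiv.Perm.permMatrix (ZMod 2) π := by
    ext i j
    have hmem : (j ∈ π.toPEquiv i) ↔ j = π i := by
      simp [Equiv.toPEquiv, eq_comm]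
    simp only [permMatrix, Equiv.Perm.permMatrix, PEquiv.toMatrix, Matrix.of_apply]
    by_cases h : j = π i
    · rw [if_pos h, if_pos (hmem.mpr h)]
    · rw [if_neg h, if_neg (fun hh => h (hmem.mp hh))]
  rw [h, Matrix.det_permutation]
  rcases Int.units_eq_one_or (Equiv.Perm.sign π) with hs | hs <;> rw [hs] <;> decide


open Matrix Finset in
theorem subspace_eq_dynFrozenSet {N : ℕ} (W : Submodule (ZMod 2) (Fin N → ZMod 2)) :
    ∃ (A : Finset (Fin N)) (v : Fin N → Fin N → ZMod 2),
      A.card = Module.finrank (ZMod 2) W ∧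
      (W : Set (Fin N → ZMod 2)) =
        dynFrozenSet A v := by
  classical
  have two : ∀ x : ZMod 2, x ≠ 0 → x = 1 := by decide
  set A : Finset (Fin N) :=
    Finset.univ.filter (fun i => ∃ u ∈ W, u i = 1 ∧ ∀ j < i, u j = 0) with hA
  -- key vanishing lemma
  have K1 : ∀ u ∈ W, ∀ i : Fin N, (∀ j ∈ A, j < i → u j = 0) → i ∉ A → u i = 0 := by
    intro u hu i hsmall hiA
    by_contra hne
    set S : Finset (Fin N) := Finset.univ.filter (fun j => u j ≠ 0) with hS
    have hiS : i ∈ S := by simp [hS, hne]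
    have hSne : S.Nonempty := ⟨i, hiS⟩
    set m := S.min' hSne with hm
    have hmS : m ∈ S := S.min'_mem hSne
    have hum : u m ≠ 0 := by simpa [hS] using hmS
    have hbefore : ∀ j < m, u j = 0 := by
      intro j hj
      by_contra hj0
      have : j ∈ S := by simp [hS, hj0]
      exact absurd (S.min'_le j this) (not_le.mpr hj)
    have hmA : m ∈ A := by
      simp only [hA, Finset.mem_filter, Finset.mem_univ, true_and]
      exact ⟨u, hu, two _ hum, hbefore⟩
    have hmi : m ≤ i := S.min'_le i hiS
    rcases lt_or_eq_of_le hmi with h | h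
    · exact hum (hsmall m hmA h)
    · exact hiA (h ▸ hmA)
  -- witnesses for each a ∈ A
  have hAspec : ∀ a ∈ A, ∃ u ∈ W, u a = 1 ∧ ∀ j < a, u j = 0 := by
    intro a ha
    simpa [hA] using (Finset.mem_filter.mp ha).2
  choose g hgW hg1 hg0 using hAspec
  -- triangular matrix of restrictions
  set M : Matrix ↥A ↥A (ZMod 2) := fun a b => g a.1 a.2 b.1 with hMdef
  have hMtri : M.BlockTriangular id := by
    intro a b hba
    exact hg0 a.1 a.2 b.1 hba
  have hMdet : M.det = 1 := by
    rw [Matrix.det_of_upperTriangular hMtri]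
    have : ∀ a : ↥A, M a a = 1 := fun a => hg1 a.1 a.2
    simp [this]
  have hMunit : IsUnit M.det := by rw [hMdet]; exact isUnit_one
  -- restriction map
  set ρ : W →ₗ[ZMod 2] (↥A → ZMod 2) :=
    { toFun := fun u a => u.1 a.1
      map_add' := fun _ _ => rfl
      map_smul' := fun _ _ => rfl } with hρ
  have hρapp : ∀ (u : W) (a : ↥A), ρ u a = u.1 a.1 := fun _ _ => rfl
  have hinj : Function.Injective ρ := by
    intro u w huw
    ext i
    have hcoord : ∀ j ∈ A, (u.1 - w.1) j = 0 := by
      intro j hj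
      have := congrFun huw ⟨j, hj⟩
      rw [hρapp, hρapp] at this
      simp [this]
    by_cases hi : i ∈ A
    · have := hcoord i hi; simpa [sub_eq_zero] using this
    · have hsub : u.1 - w.1 ∈ W := W.sub_mem u.2 w.2
      have := K1 _ hsub i (fun j hj _ => hcoord j hj) hi
      simpa [sub_eq_zero] using this
  have hsurj : Function.Surjective ρ := by
    intro t
    set c := Matrix.vecMul t M⁻¹ with hc
    have hwmem : (∑ a : ↥A, c a • g a.1 a.2) ∈ W :=
      W.sum_mem fun a _ => W.smul_mem _ (hgW a.1 a.2)
    refine ⟨⟨∑ a : ↥A, c a • g a.1 a.2, hwmem⟩, ?_⟩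
    funext b
    rw [hρapp]
    have h1 : (⟨∑ a : ↥A, c a • g a.1 a.2, hwmem⟩ : W).1 b.1
        = ∑ a : ↥A, c a * g a.1 a.2 b.1 := by
      simp [Finset.sum_apply]
    rw [h1]
    have h2 : ∑ a : ↥A, c a * g a.1 a.2 b.1 = Matrix.vecMul c M b := by
      simp [Matrix.vecMul, dotProduct, hMdef]
    rw [h2, hc, Matrix.vecMul_vecMul, Matrix.nonsing_inv_mul M hMunit, Matrix.vecMul_one]
  -- linear equivalence
  set e : W ≃ₗ[ZMod 2] (↥A → ZMod 2) := LinearEquiv.ofBijective ρ ⟨hinj, hsurj⟩ with he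
  have heapp : ∀ u : W, e u = ρ u := fun _ => rfl
  have hcard : A.card = Module.finrank (ZMod 2) W := by
    rw [e.finrank_eq, Module.finrank_pi, Fintype.card_coe]
  -- basis vectors
  set ε : ↥A → (Fin N → ZMod 2) := fun j => (e.symm (Pi.single j 1)).1 with hε
  have hεW : ∀ j, ε j ∈ W := fun j => (e.symm (Pi.single j 1)).2
  have hερ : ∀ j : ↥A, ∀ b : ↥A, ε j b.1 = if b = j then 1 else 0 := by
    intro j b
    have h0 : e (e.symm (Pi.single j 1)) = Pi.single j 1 := e.apply_symm_apply _
    rw [heapp] at h0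
    have hb := congrFun h0 b
    rw [hρapp] at hb
    rw [hε]
    simp only []
    rw [hb, Pi.single_apply]
  have hεvan : ∀ j : ↥A, ∀ i : Fin N, i ∉ A → ¬ (j.1 < i) → ε j i = 0 := by
    intro j i hiA hlt
    refine K1 _ (hεW j) i ?_ hiA
    intro b hb hbi
    rw [hερ j ⟨b, hb⟩]
    have hne : (⟨b, hb⟩ : ↥A) ≠ j := by
      intro h
      apply hlt
      have : b = j.1 := congrArg Subtype.val h
      omega
    simp [hne]
  -- decomposition
  have hdec : ∀ u ∈ W, u = ∑ j : ↥A, u j.1 • ε j := by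
    intro u hu
    have h1 : e ⟨u, hu⟩ = ∑ j : ↥A, u j.1 • Pi.single j (1 : ZMod 2) := by
      funext a
      rw [heapp, hρapp]
      simp only [Finset.sum_apply, Pi.smul_apply, smul_eq_mul, Pi.single_apply,
        mul_ite, mul_one, mul_zero]
      rw [Finset.sum_ite_eq Finset.univ a (fun j : ↥A => u j.1)]
      simp
    have h2 : (⟨u, hu⟩ : W) = ∑ j : ↥A, u j.1 • e.symm (Pi.single j 1) := by
      calc (⟨u, hu⟩ : W) = e.symm (e ⟨u, hu⟩) := (e.symm_apply_apply _).symm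
        _ = e.symm (∑ j : ↥A, u j.1 • Pi.single j (1 : ZMod 2)) := by rw [h1]
        _ = ∑ j : ↥A, u j.1 • e.symm (Pi.single j 1) := by
            rw [map_sum]
            exact Finset.sum_congr rfl fun j _ => e.symm.map_smul _ _
    have h3 : u = W.subtype (∑ j : ↥A, u j.1 • e.symm (Pi.single j 1)) := by
      rw [← h2]; rfl
    conv_lhs => rw [h3]
    rw [map_sum]
    refine Finset.sum_congr rfl fun j _ => ?_
    rw [W.subtype.map_smul]
    rfl
  -- the coefficients
  set v : Fin N → Fin N → ZMod 2 :=
    fun j i => if h : j ∈ A then ε ⟨j, h⟩ i else 0 with hv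
  -- forward direction, stated once
  have hforward : ∀ x ∈ W, ∀ i ∉ A,
      x i = ∑ j ∈ A.filter (fun j => j < i), v j i * x j := by
    intro x hx i hiA
    have hxdec : x i = ∑ j : ↥A, x j.1 * ε j i := by
      conv_lhs => rw [hdec x hx]
      simp [Finset.sum_apply]
    have step1 : ∑ j ∈ A.filter (fun j => j < i), v j i * x j
        = ∑ j ∈ A, v j i * x j := by
      apply Finset.sum_subset (Finset.filter_subset _ _)
      intro j hj hnj
      have hlt : ¬ j < i := by
        intro h
        exact hnj (Finset.mem_filter.mpr ⟨hj, h⟩)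
      have hz : v j i = 0 := by
        rw [hv]
        simp only [dif_pos hj]
        exact hεvan ⟨j, hj⟩ i hiA hlt
      rw [hz, zero_mul]
    have step2 : ∑ j ∈ A, v j i * x j = ∑ j : ↥A, ε j i * x j.1 := by
      rw [← Finset.sum_attach A (fun j => v j i * x j)]
      refine Finset.sum_congr rfl fun j _ => ?_
      rw [hv]
      simp only [dif_pos j.2]
    rw [hxdec, step1, step2]
    exact Finset.sum_congr rfl fun j _ => by ring
  refine ⟨A, v, hcard, ?_⟩
  ext u
  simp only [SetLike.mem_coe, Set.mem_setOf_eq]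
  constructor
  · exact fun hu => hforward u hu
  · intro hu
    set w : Fin N → ZMod 2 := ∑ j : ↥A, u j.1 • ε j with hw
    have hwW : w ∈ W := W.sum_mem fun j _ => W.smul_mem _ (hεW j)
    have hwA : ∀ a : ↥A, w a.1 = u a.1 := by
      intro a
      rw [hw]
      simp only [Finset.sum_apply, Pi.smul_apply, smul_eq_mul]
      have hterm : ∀ j : ↥A, u j.1 * ε j a.1 = if a = j then u j.1 else 0 := by
        intro j
        rw [hερ j a]
        by_cases h : a = j <;> simp [h]
      rw [Finset.sum_congr rfl fun j _ => hterm j,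
        Finset.sum_ite_eq Finset.univ a (fun j : ↥A => u j.1)]
      simp
    have : u = w := by
      funext i
      by_cases hi : i ∈ A
      · exact (hwA ⟨i, hi⟩).symm
      · rw [hu i hi, hforward w hwW i hi]
        refine Finset.sum_congr rfl fun j hj => ?_
        have hjA : j ∈ A := (Finset.mem_filter.mp hj).1
        rw [hwA ⟨j, hjA⟩]
    rw [this]
    exact hwW

/-- Every `K`-dimensional linear code `C ⊆ 𝔽₂^N` (`N = 2^n`) is a modified
`G_N`-coset code: with `G_N = P_π · G₂^{⊗n}`, there are a size-`K` information
set `A` and dynamic-frozen-bit coefficients `v` such that `C` is exactly the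
image under `u ↦ u · G_N` of the vectors satisfying the dynamic frozen bit
constraints. -/
theorem linear_code_is_modified_coset_code (n K : ℕ)
    (π : Equiv.Perm (Fin (2 ^ n)))
    (C : Submodule (ZMod 2) (Fin (2 ^ n) → ZMod 2))
    (hC : Module.finrank (ZMod 2) C = K) :
    ∃ (A : Finset (Fin (2 ^ n))) (v : Fin (2 ^ n) → Fin (2 ^ n) → ZMod 2),
      A.card = K ∧
      (C : Set (Fin (2 ^ n) → ZMod 2)) =
        {c : Fin (2 ^ n) → ZMod 2 | ∃ u ∈ dynFrozenSet A v,
          c = Matrix.vecMul u (permMatrix π * kronPow n)} := by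
  classical
  set G := permMatrix π * kronPow n with hG
  have hdet : IsUnit G.det := by
    rw [hG, Matrix.det_mul, det_permMatrix, det_kronPow, one_mul]
    exact isUnit_one
  set φ : (Fin (2 ^ n) → ZMod 2) →ₗ[ZMod 2] (Fin (2 ^ n) → ZMod 2) := G.vecMulLinear with hφ
  set φ' : (Fin (2 ^ n) → ZMod 2) →ₗ[ZMod 2] (Fin (2 ^ n) → ZMod 2) := (G⁻¹).vecMulLinear with hφ'
  have h1 : φ.comp φ' = LinearMap.id := by
    apply LinearMap.ext
    intro x
    simp only [LinearMap.comp_apply, hφ, hφ', Matrix.vecMulLinear_apply, LinearMap.id_apply,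
      Matrix.vecMul_vecMul, Matrix.nonsing_inv_mul G hdet, Matrix.vecMul_one]
  have h2 : φ'.comp φ = LinearMap.id := by
    apply LinearMap.ext
    intro x
    simp only [LinearMap.comp_apply, hφ, hφ', Matrix.vecMulLinear_apply, LinearMap.id_apply,
      Matrix.vecMul_vecMul, Matrix.mul_nonsing_inv G hdet, Matrix.vecMul_one]
  set ψ : (Fin (2 ^ n) → ZMod 2) ≃ₗ[ZMod 2] (Fin (2 ^ n) → ZMod 2) :=
    LinearEquiv.ofLinear φ φ' h1 h2 with hψ
  have hψapp : ∀ u, ψ u = Matrix.vecMul u G := fun u => Matrix.vecMulLinear_apply G u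
  set W := Submodule.map ψ.symm.toLinearMap C with hW
  have hrank : Module.finrank (ZMod 2) W = K := by
    rw [hW, LinearEquiv.finrank_map_eq ψ.symm C]
    exact hC
  obtain ⟨A, v, hAcard, hWset⟩ := subspace_eq_dynFrozenSet W
  refine ⟨A, v, by rw [hAcard, hrank], ?_⟩
  have hWdyn : (W : Set (Fin (2 ^ n) → ZMod 2)) = dynFrozenSet A v := hWset
  ext c
  simp only [SetLike.mem_coe, Set.mem_setOf_eq]
  constructor
  · intro hc
    refine ⟨ψ.symm c, ?_, ?_⟩
    · have hmem : ψ.symm c ∈ W := Submodule.mem_map_of_mem hc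
      rw [← hWdyn]
      exact hmem
    · rw [← hψapp (ψ.symm c), ψ.apply_symm_apply]
  · rintro ⟨u, huf, hcu⟩
    have huW : u ∈ W := by
      rw [← SetLike.mem_coe, hWdyn]
      exact huf
    rw [hW] at huW
    obtain ⟨x, hxC, hxu⟩ := huW
    have hxu' : ψ.symm x = u := hxu
    have : c = x := by
      rw [hcu, ← hψapp u, ← hxu', ψ.apply_symm_apply]
    rw [this]
    exact hxC
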